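/- Let r > 0, D ≥ 1, and define ξ_n : ℝ^D → ℝ by ξ_n(x) = r^{−D/2} ∏_{β=1}^D χ_n(x_β / r), where χ_n(x) = I_n^{−1/2}(1 − x²)^{n/2} on [−1,1] (extended by 0) and I_n = ∫_{−1}^{1}(1−x²)^n dx. Let ε_n = (r/√n)(1, 1, …, 1) ∈ ℝ^D. Then for every coordinate α ∈ {1, …, D}, the partial derivative ∂_α ξ_n evaluated at the point −ε_n tends to +∞ as n → ∞. -/

import Mathlib

open MeasureTheory Filter

/-- `I_n = ∫_{−1}^{1} (1 − x²)^n dx`. -/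
noncomputable def In (n : ℕ) : ℝ := ∫ x in (-1:ℝ)..1, (1 - x ^ 2) ^ n

/-- The normalized bump function `χ_n(x) = I_n^{−1/2} (1 − x²)^{n/2}` on `[−1, 1]`,
extended by `0` outside. -/
noncomputable def chi (n : ℕ) (x : ℝ) : ℝ :=
  if x ∈ Set.Icc (-1 : ℝ) 1 then (In n) ^ (-(1:ℝ)/2) * (1 - x ^ 2) ^ ((n : ℝ)/2) else 0

/-- The `D`-dimensional product bump function
`ξ_n(x₁, …, x_D) = r^{−D/2} ∏_{β=1}^D χ_n(x_β / r)`. -/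
noncomputable def xiBump (D : ℕ) (r : ℝ) (n : ℕ) (x : EuclideanSpace ℝ (Fin D)) : ℝ :=
  r ^ (-(D:ℝ)/2) * ∏ β : Fin D, chi n (x β / r)

/-- The shift vector `ε_n = (r/√n)(1, …, 1) ∈ ℝ^D`. -/
noncomputable def epsShift (D : ℕ) (r : ℝ) (n : ℕ) : EuclideanSpace ℝ (Fin D) :=
  WithLp.toLp 2 (fun _ => r / Real.sqrt n)

lemma In_pos (n : ℕ) : 0 < In n := by
  apply intervalIntegral.intervalIntegral_pos_of_pos_on
  · exact (Continuous.intervalIntegrable (by continuity) _ _)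
  · intro x hx
    have h1 : 0 < 1 - x ^ 2 := by nlinarith [hx.1, hx.2]
    positivity
  · norm_num

lemma In_le_two (n : ℕ) : In n ≤ 2 := by
  have h : In n ≤ ∫ _x in (-1:ℝ)..1, (1:ℝ) := by
    apply intervalIntegral.integral_mono_on (by norm_num)
      (Continuous.intervalIntegrable (by continuity) _ _)
      (intervalIntegrable_const)
    intro x hx
    have h0 : 0 ≤ 1 - x ^ 2 := by nlinarith [hx.1, hx.2]
    calc (1 - x ^ 2) ^ n ≤ 1 ^ n := pow_le_pow_left₀ h0 (by nlinarith [hx.1, hx.2]) n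
    _ = 1 := one_pow n
  rw [intervalIntegral.integral_const] at h
  norm_num at h
  exact h

/-- The derivative of `chi n` at interior points. -/
lemma hasDerivAt_chi (n : ℕ) {x : ℝ} (hx : x ∈ Set.Ioo (-1:ℝ) 1) :
    HasDerivAt (chi n)
      ((In n) ^ (-(1:ℝ)/2) * ((-(2*x)) * ((n:ℝ)/2) * (1 - x ^ 2) ^ ((n:ℝ)/2 - 1))) x := by
  have hpos : 0 < 1 - x ^ 2 := by nlinarith [hx.1, hx.2]
  have h1 : HasDerivAt (fun y : ℝ => 1 - y ^ 2) (-(2*x)) x := by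
    simpa using ((hasDerivAt_pow 2 x).const_sub 1)
  have h2 := (h1.rpow_const (p := (n:ℝ)/2) (Or.inl hpos.ne')).const_mul ((In n) ^ (-(1:ℝ)/2))
  apply h2.congr_of_eventuallyEq
  filter_upwards [isOpen_Ioo.mem_nhds hx] with y hy
  have : y ∈ Set.Icc (-1:ℝ) 1 := ⟨hy.1.le, hy.2.le⟩
  simp [chi, this]

/-- The partial derivative of `xiBump` at a point whose coordinates are interior. -/
lemma fderiv_xiBump_apply (D n : ℕ) (r : ℝ) (hr : r ≠ 0)
    (p : EuclideanSpace ℝ (Fin D)) (hp : ∀ β, p β / r ∈ Set.Ioo (-1:ℝ) 1) (α : Fin D) :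
    fderiv ℝ (xiBump D r n) p (EuclideanSpace.single α 1) =
      r ^ (-(D:ℝ)/2) * ((∏ γ ∈ Finset.univ.erase α, chi n (p γ / r)) *
        (((In n) ^ (-(1:ℝ)/2) * ((-(2*(p α / r))) * ((n:ℝ)/2)
          * (1 - (p α / r) ^ 2) ^ ((n:ℝ)/2 - 1))) * r⁻¹)) := by
  set d : Fin D → ℝ := fun β =>
    (In n) ^ (-(1:ℝ)/2) * ((-(2*(p β / r))) * ((n:ℝ)/2)
      * (1 - (p β / r) ^ 2) ^ ((n:ℝ)/2 - 1)) with hd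
  have hin : ∀ β : Fin D, HasFDerivAt (fun x : EuclideanSpace ℝ (Fin D) => x β / r)
      ((r⁻¹ : ℝ) • (EuclideanSpace.proj β : EuclideanSpace ℝ (Fin D) →L[ℝ] ℝ)) p := by
    intro β
    have h := ((r⁻¹ : ℝ) • (EuclideanSpace.proj β :
      EuclideanSpace ℝ (Fin D) →L[ℝ] ℝ)).hasFDerivAt (x := p)
    have he : ⇑((r⁻¹ : ℝ) • (EuclideanSpace.proj β :
        EuclideanSpace ℝ (Fin D) →L[ℝ] ℝ)) = fun x : EuclideanSpace ℝ (Fin D) => x β / r := by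
      ext x; simp [div_eq_inv_mul]
    rwa [he] at h
  have hfac : ∀ β : Fin D, HasFDerivAt
      (fun x : EuclideanSpace ℝ (Fin D) => chi n (x β / r))
      (d β • ((r⁻¹ : ℝ) • (EuclideanSpace.proj β : EuclideanSpace ℝ (Fin D) →L[ℝ] ℝ))) p := by
    intro β
    exact (hasDerivAt_chi n (hp β)).comp_hasFDerivAt p (hin β)
  have hprod : HasFDerivAt
      (fun x : EuclideanSpace ℝ (Fin D) => ∏ β : Fin D, chi n (x β / r))
      (∑ β : Fin D, (∏ γ ∈ Finset.univ.erase β, chi n (p γ / r)) •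
        (d β • ((r⁻¹ : ℝ) • (EuclideanSpace.proj β : EuclideanSpace ℝ (Fin D) →L[ℝ] ℝ)))) p :=
    HasFDerivAt.finset_prod (fun β _ => hfac β)
  have hfull : HasFDerivAt (xiBump D r n)
      ((r ^ (-(D:ℝ)/2)) • ∑ β : Fin D, (∏ γ ∈ Finset.univ.erase β, chi n (p γ / r)) •
        (d β • ((r⁻¹ : ℝ) • (EuclideanSpace.proj β : EuclideanSpace ℝ (Fin D) →L[ℝ] ℝ)))) p := by
    have h := hprod.const_smul (r ^ (-(D:ℝ)/2))
    apply h.congr_of_eventuallyEq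
    filter_upwards with x
    simp [xiBump, smul_eq_mul]
  rw [hfull.fderiv]
  simp only [ContinuousLinearMap.coe_smul', Pi.smul_apply, ContinuousLinearMap.coe_sum',
    Finset.sum_apply, smul_eq_mul]
  rw [Finset.sum_eq_single α]
  · simp only [PiLp.proj_apply, EuclideanSpace.single_apply, if_pos rfl, if_true, mul_one, hd]
  · intro β _ hβ
    simp [EuclideanSpace.single_apply, hβ]
  · simp

lemma exp_le_one_sub (t : ℝ) (ht0 : 0 ≤ t) (ht : t ≤ 1/2) : Real.exp (-(2*t)) ≤ 1 - t := by
  have h1 : 2*t + 1 ≤ Real.exp (2*t) := Real.add_one_le_exp (2*t)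
  have h2 : 0 < Real.exp (2*t) := Real.exp_pos _
  rw [Real.exp_neg, inv_eq_one_div, div_le_iff₀ h2]
  nlinarith

/-- Lower bound `(1 - 1/n)^y ≥ e^{-2}` for `0 ≤ y ≤ n`, `n ≥ 2`. -/
lemma rpow_base_bound (n : ℕ) (hn : 2 ≤ n) (y : ℝ) (hy : 0 ≤ y) (hyn : y ≤ n) :
    Real.exp (-2) ≤ ((1:ℝ) - 1/n) ^ y := by
  have hn0 : (0:ℝ) < n := by positivity
  have hb : Real.exp (-(2*(1/(n:ℝ)))) ≤ 1 - 1/n := by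
    apply exp_le_one_sub
    · positivity
    · rw [div_le_div_iff₀ hn0 (by norm_num)]
      have : (2:ℝ) ≤ n := by exact_mod_cast hn
      linarith
  calc Real.exp (-2) ≤ Real.exp (-(2*(1/(n:ℝ))) * y) := by
        apply Real.exp_le_exp.mpr
        have key : 2*(1/(n:ℝ))*y ≤ 2*(1/(n:ℝ))*(n:ℝ) :=
          mul_le_mul_of_nonneg_left hyn (by positivity)
        have key2 : 2*(1/(n:ℝ))*(n:ℝ) = 2 := by field_simp
        nlinarith
  _ = (Real.exp (-(2*(1/(n:ℝ))))) ^ y := by rw [← Real.exp_mul]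
  _ ≤ ((1:ℝ) - 1/n) ^ y := Real.rpow_le_rpow (Real.exp_pos _).le hb hy

/-- `In n ^ (-(1:ℝ)/2) ≥ 1/2`. -/
lemma In_rpow_bound (n : ℕ) : (1:ℝ)/2 ≤ (In n) ^ (-(1:ℝ)/2) := by
  have h0 := In_pos n
  have h2 := In_le_two n
  have h4 : In n ≤ 4 := by linarith
  have h : (In n) ^ ((1:ℝ)/2) ≤ (4:ℝ) ^ ((1:ℝ)/2) := Real.rpow_le_rpow h0.le h4 (by norm_num)
  have h42 : (4:ℝ) ^ ((1:ℝ)/2) = 2 := by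
    rw [show (4:ℝ) = 2^(2:ℕ) by norm_num, ← Real.rpow_natCast 2 2, ← Real.rpow_mul (by norm_num)]
    norm_num
  have hpos : 0 < (In n) ^ ((1:ℝ)/2) := Real.rpow_pos_of_pos h0 _
  have hinv : (In n) ^ (-(1:ℝ)/2) = ((In n) ^ ((1:ℝ)/2))⁻¹ := by
    rw [← Real.rpow_neg h0.le]; norm_num
  rw [hinv, ← one_div]
  rw [h42] at h
  exact one_div_le_one_div_of_le hpos h

/-- For `r > 0`, `D ≥ 1` and each coordinate `α`, the partial derivative
`∂_α ξ_n` evaluated at `−ε_n` tends to `+∞` as `n → ∞`. -/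
theorem tendsto_partialDeriv_xiBump_atTop
    (D : ℕ) (hD : 1 ≤ D) (r : ℝ) (hr : 0 < r) (α : Fin D) :
    Tendsto (fun n : ℕ =>
        fderiv ℝ (xiBump D r n) (-(epsShift D r n)) (EuclideanSpace.single α 1))
      atTop atTop := by
  have hrne : r ≠ 0 := hr.ne'
  set K : ℝ := r ^ (-(D:ℝ)/2) * (((1/2) * Real.exp (-2)) ^ (D-1) *
      (((1/2) * Real.exp (-2)) * r⁻¹)) with hK
  have hKpos : 0 < K := by positivity
  have hsqrt : Tendsto (fun n : ℕ => Real.sqrt n) atTop atTop := by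
    apply Filter.tendsto_atTop_atTop.mpr
    intro b
    refine ⟨⌈(b^2 : ℝ)⌉₊, fun n hn => ?_⟩
    have h1 : (b^2 : ℝ) ≤ n := le_trans (Nat.le_ceil _) (by exact_mod_cast hn)
    rcases le_or_gt b 0 with hb | hb
    · exact le_trans hb (Real.sqrt_nonneg _)
    · rw [show (b:ℝ) = Real.sqrt (b^2) by rw [Real.sqrt_sq hb.le]]
      exact Real.sqrt_le_sqrt h1
  have hKs : Tendsto (fun n : ℕ => K * Real.sqrt n) atTop atTop :=
    Filter.Tendsto.const_mul_atTop hKpos hsqrt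
  apply tendsto_atTop_mono' atTop ?_ hKs
  filter_upwards [eventually_ge_atTop 2] with n hn
  have hn2 : (2:ℝ) ≤ n := by exact_mod_cast hn
  have hn0 : (0:ℝ) < n := by linarith
  have hsq : 0 < Real.sqrt n := Real.sqrt_pos.mpr hn0
  have h1sq : 1 < Real.sqrt n := by
    rw [show (1:ℝ) = Real.sqrt 1 by simp]
    exact Real.sqrt_lt_sqrt (by norm_num) (by linarith)
  set s : ℝ := -(1 / Real.sqrt n) with hs
  have hps : ∀ β : Fin D, (-(epsShift D r n) : EuclideanSpace ℝ (Fin D)) β / r = s := by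
    intro β
    have hneg : (-(epsShift D r n) : EuclideanSpace ℝ (Fin D)) β = -(r / Real.sqrt n) := by
      simp [epsShift]
    rw [hneg]
    rw [hs]
    field_simp
  have hsIoo : s ∈ Set.Ioo (-1:ℝ) 1 := by
    constructor
    · rw [hs, neg_lt_neg_iff]
      exact (div_lt_one hsq).mpr h1sq
    · rw [hs]
      have : 0 < 1 / Real.sqrt n := by positivity
      linarith
  have hs2 : s ^ 2 = 1 / (n:ℝ) := by
    rw [hs, neg_pow, div_pow, one_pow, Real.sq_sqrt hn0.le]
    ring
  have hds : -(2*s) * ((n:ℝ)/2) = Real.sqrt n := by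
    rw [hs]
    field_simp
    nlinarith [Real.mul_self_sqrt hn0.le]
  have hchi : chi n s = (In n) ^ (-(1:ℝ)/2) * ((1:ℝ) - 1/n) ^ ((n:ℝ)/2) := by
    have hmem : s ∈ Set.Icc (-1:ℝ) 1 := ⟨hsIoo.1.le, hsIoo.2.le⟩
    simp [chi, hmem, hs2]
  have hchib : (1/2) * Real.exp (-2) ≤ chi n s := by
    rw [hchi]
    exact mul_le_mul (In_rpow_bound n)
      (rpow_base_bound n hn ((n:ℝ)/2) (by positivity) (by linarith))
      (Real.exp_pos _).le (Real.rpow_nonneg (In_pos n).le _)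
  have hdb : (1/2) * (Real.sqrt n * Real.exp (-2)) ≤
      (In n) ^ (-(1:ℝ)/2) * (Real.sqrt n * ((1:ℝ) - 1/n) ^ ((n:ℝ)/2 - 1)) := by
    apply mul_le_mul (In_rpow_bound n) ?_ (by positivity) (Real.rpow_nonneg (In_pos n).le _)
    exact mul_le_mul_of_nonneg_left
      (rpow_base_bound n hn ((n:ℝ)/2 - 1) (by linarith) (by linarith)) hsq.le
  have hval := fderiv_xiBump_apply D n r hrne (-(epsShift D r n))
    (fun β => by rw [hps β]; exact hsIoo) α
  rw [hval]
  simp only [hps, hs2]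
  rw [Finset.prod_const]
  have hcard : (Finset.univ.erase α).card = D - 1 := by
    rw [Finset.card_erase_of_mem (Finset.mem_univ α), Finset.card_univ, Fintype.card_fin]
  rw [hcard, hds]
  calc K * Real.sqrt n
      = r ^ (-(D:ℝ)/2) * (((1/2) * Real.exp (-2)) ^ (D-1) *
          (((1/2) * (Real.sqrt n * Real.exp (-2))) * r⁻¹)) := by rw [hK]; ring
    _ ≤ _ := by
        gcongr <;>
          first
            | exact pow_nonneg (le_trans (by positivity) hchib) _
            | exact hchib
            | exact hdb
            | positivity
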